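/- The maximal value over policies from the root equals the maximal regularized objective over decision trees: max_π V^π(Ω) = max over DTs T of R(T); moreover, for any optimal policy π* (one maximizing V^π(Ω)), the DT T^{π*} of π* attains this maximum, i.e. R(T^{π*}) = max_T R(T). -/
import Mathlib


open Finset

/-- A branch: for each feature, either unused (`none`) or fixed to a category. -/
abbrev Branch (q : ℕ) (C : Fin q → ℕ) : Type := ∀ i : Fin q, Option (Fin (C i))

/-- States: `Sum.inl l` is the (non-terminal) branch `l`, `Sum.inr l` is its terminal state `l̄`. -/
abbrev BState (q : ℕ) (C : Fin q → ℕ) : Type := Branch q C ⊕ Branch q C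

/-- The root branch `Ω`. -/
def root (q : ℕ) (C : Fin q → ℕ) : Branch q C := fun _ => none

/-- The child of `l` obtained by fixing unused feature `i` to category `j`. -/
def child {q : ℕ} {C : Fin q → ℕ} (l : Branch q C) (i : Fin q) (j : Fin (C i)) : Branch q C :=
  Function.update l i (some j)

/-- `Children(l, i)`. -/
def childrenF {q : ℕ} {C : Fin q → ℕ} (l : Branch q C) (i : Fin q) : Finset (Branch q C) :=
  Finset.univ.image (fun j : Fin (C i) => child l i j)

/-- A policy: `act l = none` is the terminal action `ā`, `act l = some i` splits on the
unused feature `i`. -/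
structure Policy (q : ℕ) (C : Fin q → ℕ) where
  act : Branch q C → Option (Fin q)
  valid : ∀ l i, act l = some i → l i = none

/-- Transition set of the action taken by `π` at branch `l`. -/
def stepSet {q : ℕ} {C : Fin q → ℕ} (π : Policy q C) (l : Branch q C) : Finset (BState q C) :=
  match π.act l with
  | none => {Sum.inr l}
  | some i => (childrenF l i).image Sum.inl

/-- Trajectory of policy `π` from branch `l`. -/
def traj {q : ℕ} {C : Fin q → ℕ} (π : Policy q C) (l : Branch q C) : ℕ → Finset (BState q C)
  | 0 => {Sum.inl l}
  | t + 1 => (traj π l t).biUnion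
      (fun s => Sum.elim (fun lu => stepSet π lu) (fun lu => ({Sum.inr lu} : Finset (BState q C))) s)

/-- `τ_l^π`: minimal time `t ≥ 1` at which the trajectory consists of terminal states only. -/
noncomputable def tau {q : ℕ} {C : Fin q → ℕ} (π : Policy q C) (l : Branch q C) : ℕ :=
  sInf {t : ℕ | 1 ≤ t ∧ ∀ x ∈ traj π l t, x.isRight}

/-- A data point `x` is in branch `l`. -/
def inBranch {q : ℕ} {C : Fin q → ℕ} (l : Branch q C) (x : ∀ i : Fin q, Fin (C i)) : Prop :=
  ∀ (i : Fin q) (c : Fin (C i)), l i = some c → x i = c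

instance {q : ℕ} {C : Fin q → ℕ} (l : Branch q C) (x : ∀ i, Fin (C i)) :
    Decidable (inBranch l x) := by unfold inBranch; infer_instance

/-- `n(l)`: number of data points in `l`. -/
def nIn {q K : ℕ} {C : Fin q → ℕ} (D : Multiset ((∀ i : Fin q, Fin (C i)) × Fin K))
    (l : Branch q C) : ℕ :=
  (D.filter (fun p => inBranch l p.1)).card

/-- `n_k(l)`: number of data points in `l` of class `k`. -/
def nk {q K : ℕ} {C : Fin q → ℕ} (D : Multiset ((∀ i : Fin q, Fin (C i)) × Fin K))
    (l : Branch q C) (k : Fin K) : ℕ :=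
  (D.filter (fun p => inBranch l p.1 ∧ p.2 = k)).card

/-- `H(l) = (max_k n_k(l)) / n`. -/
noncomputable def Hb {q K : ℕ} {C : Fin q → ℕ} (D : Multiset ((∀ i : Fin q, Fin (C i)) × Fin K))
    (l : Branch q C) : ℝ :=
  ((Finset.univ.sup (fun k : Fin K => nk D l k) : ℕ) : ℝ) / (Multiset.card D : ℝ)

/-- Reward collected at a state of the trajectory: `H(l)` for the terminal action,
`-λ` for a split action, `0` at terminal states. -/
noncomputable def rew {q K : ℕ} {C : Fin q → ℕ}
    (D : Multiset ((∀ i : Fin q, Fin (C i)) × Fin K)) (lam : ℝ) (π : Policy q C) :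
    BState q C → ℝ
  | Sum.inl lu => match π.act lu with
      | none => Hb D lu
      | some _ => -lam
  | Sum.inr _ => 0

/-- Value `V^π(l)`. -/
noncomputable def V {q K : ℕ} {C : Fin q → ℕ}
    (D : Multiset ((∀ i : Fin q, Fin (C i)) × Fin K)) (lam : ℝ)
    (π : Policy q C) (l : Branch q C) : ℝ :=
  ∑ t ∈ Finset.range (tau π l), ∑ x ∈ traj π l t, rew D lam π x

/-- State-action value `Q^π(l, a)`. -/
noncomputable def Qv {q K : ℕ} {C : Fin q → ℕ}
    (D : Multiset ((∀ i : Fin q, Fin (C i)) × Fin K)) (lam : ℝ)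
    (π : Policy q C) (l : Branch q C) : Option (Fin q) → ℝ
  | none => Hb D l
  | some i => -lam + ∑ j : Fin (C i), V D lam π (child l i j)

/-- The available actions `A(l)`. -/
def Avail {q : ℕ} {C : Fin q → ℕ} (l : Branch q C) : Finset (Option (Fin q)) :=
  insert none ((Finset.univ.filter (fun i : Fin q => l i = none)).image some)

theorem Avail_nonempty {q : ℕ} {C : Fin q → ℕ} (l : Branch q C) : (Avail l).Nonempty :=
  ⟨none, Finset.mem_insert_self _ _⟩

/-- The sub-DT of `π` rooted in `l`: the branches whose terminal states constitute
the trajectory at time `τ_l^π`. -/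
noncomputable def subDTof {q : ℕ} {C : Fin q → ℕ} (π : Policy q C) (l : Branch q C) : Finset (Branch q C) :=
  (traj π l (tau π l)).image (Sum.elim id id)

/-- `SubDT l T m`: `T` is a sub-DT rooted in `l` obtained by `m` split operations. -/
inductive SubDT {q : ℕ} {C : Fin q → ℕ} : Branch q C → Finset (Branch q C) → ℕ → Prop
  | leaf (l : Branch q C) : SubDT l {l} 0
  | split (l : Branch q C) (T : Finset (Branch q C)) (m : ℕ) (l' : Branch q C) (i : Fin q)
      (hT : SubDT l T m) (hmem : l' ∈ T) (hnone : l' i = none) :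
      SubDT l (T.erase l' ∪ childrenF l' i) (m + 1)

/-- `H(T) = ∑_{l ∈ T} H(l)`. -/
noncomputable def HT {q K : ℕ} {C : Fin q → ℕ}
    (D : Multiset ((∀ i : Fin q, Fin (C i)) × Fin K)) (T : Finset (Branch q C)) : ℝ :=
  ∑ l ∈ T, Hb D l

/-- `splits(l)`: number of features used by branch `l`. -/
def nsplits {q : ℕ} {C : Fin q → ℕ} (l : Branch q C) : ℕ :=
  (Finset.univ.filter (fun i : Fin q => l i ≠ none)).card
section Aux

variable {q K : ℕ} {C : Fin q → ℕ}

/-- `l'` extends `l`: agrees on all used features of `l`. -/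
def BExt (l l' : Branch q C) : Prop := ∀ i, l i ≠ none → l' i = l i

lemma BExt.refl (l : Branch q C) : BExt l l := fun _ _ => rfl

lemma BExt.trans {l₁ l₂ l₃ : Branch q C} (h1 : BExt l₁ l₂) (h2 : BExt l₂ l₃) : BExt l₁ l₃ := by
  intro i hi
  rw [h2 i (by rw [h1 i hi]; exact hi), h1 i hi]

lemma child_apply_self (l : Branch q C) (i : Fin q) (j : Fin (C i)) :
    child l i j i = some j := Function.update_self _ _ _

lemma child_apply_ne (l : Branch q C) {i i' : Fin q} (j : Fin (C i)) (h : i' ≠ i) :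
    child l i j i' = l i' := Function.update_of_ne h _ _

lemma ext_child {l : Branch q C} {i : Fin q} (h : l i = none) (j : Fin (C i)) :
    BExt l (child l i j) := by
  intro i' hi'
  rcases eq_or_ne i' i with rfl | hne
  · exact absurd h hi'
  · exact child_apply_ne l j hne

lemma ext_coord {l l' : Branch q C} {i : Fin q} {j : Fin (C i)}
    (h : BExt (child l i j) l') : l' i = some j := by
  rw [h i (by rw [child_apply_self]; simp), child_apply_self]

lemma child_injective (l : Branch q C) (i : Fin q) :
    Function.Injective (child l i) := by
  intro j j' h
  have := congrFun h i
  rw [child_apply_self, child_apply_self] at this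
  exact Option.some_injective _ this

lemma exists_inBranch (hC1 : ∀ i, 1 ≤ C i) (l : Branch q C) : ∃ x, inBranch l x := by
  refine ⟨fun i => (l i).getD ⟨0, hC1 i⟩, fun i c h => ?_⟩
  simp [h]

lemma inBranch_of_ext {l l' : Branch q C} (h : BExt l l')
    {x : ∀ i, Fin (C i)} (hx : inBranch l' x) : inBranch l x := by
  intro i c hc
  exact hx i c (by rw [h i (by rw [hc]; simp), hc])

lemma inBranch_child_coord {l : Branch q C} {i : Fin q} {j : Fin (C i)}
    {x : ∀ i, Fin (C i)} (hx : inBranch (child l i j) x) : x i = j :=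
  hx i j (child_apply_self l i j)

end Aux
section Traj

variable {q K : ℕ} {C : Fin q → ℕ}

lemma mem_stepSet_iff {π : Policy q C} {l : Branch q C} {s : BState q C} :
    s ∈ stepSet π l ↔ (π.act l = none ∧ s = Sum.inr l) ∨
      ∃ (i : Fin q) (j : Fin (C i)), π.act l = some i ∧ s = Sum.inl (child l i j) := by
  unfold stepSet
  rcases h : π.act l with _ | i
  · simp [h]
  · simp only [h, childrenF, Finset.image_image, Finset.mem_image, Finset.mem_univ, true_and]
    constructor
    · rintro ⟨j, rfl⟩; exact Or.inr ⟨i, j, rfl, rfl⟩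
    · rintro (⟨h', _⟩ | ⟨i', j, hi', rfl⟩)
      · exact absurd h' (by simp)
      · obtain rfl : i = i' := Option.some_injective _ hi'
        exact ⟨j, rfl⟩

lemma mem_traj_ext {π : Policy q C} {l : Branch q C} :
    ∀ t, ∀ s ∈ traj π l t, BExt l (Sum.elim id id s) := by
  intro t
  induction t with
  | zero => intro s hs; simp only [traj, Finset.mem_singleton] at hs; subst hs; exact BExt.refl l
  | succ t ih =>
    intro s hs
    simp only [traj, Finset.mem_biUnion] at hs
    obtain ⟨s', hs', hmem⟩ := hs
    rcases s' with lu | lu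
    · simp only [Sum.elim_inl] at hmem
      rcases mem_stepSet_iff.1 hmem with ⟨_, rfl⟩ | ⟨i, j, hi, rfl⟩
      · exact ih (Sum.inl lu) hs'
      · exact (ih (Sum.inl lu) hs').trans (ext_child (π.valid lu i hi) j)
    · simp only [Sum.elim_inr, Finset.mem_singleton] at hmem
      subst hmem
      exact ih (Sum.inr lu) hs'

lemma nsplits_child {l : Branch q C} {i : Fin q} (h : l i = none) (j : Fin (C i)) :
    nsplits (child l i j) = nsplits l + 1 := by
  unfold nsplits
  have hset : Finset.univ.filter (fun i' : Fin q => child l i j i' ≠ none)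
      = insert i (Finset.univ.filter (fun i' : Fin q => l i' ≠ none)) := by
    ext i'
    rcases eq_or_ne i' i with rfl | hne
    · simp [child_apply_self]
    · simp [child_apply_ne l j hne, hne]
  rw [hset, Finset.card_insert_of_notMem (by simp [h])]

lemma nsplits_le (l : Branch q C) : nsplits l ≤ q := by
  unfold nsplits
  exact (Finset.card_filter_le _ _).trans (by simp)

lemma mem_traj_inl {π : Policy q C} {l : Branch q C} :
    ∀ t lu, Sum.inl lu ∈ traj π l t → nsplits lu = nsplits l + t := by
  intro t
  induction t with
  | zero => intro lu hlu; simp only [traj, Finset.mem_singleton, Sum.inl.injEq] at hlu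
            subst hlu; rfl
  | succ t ih =>
    intro lu hlu
    simp only [traj, Finset.mem_biUnion] at hlu
    obtain ⟨s', hs', hmem⟩ := hlu
    rcases s' with lu' | lu'
    · simp only [Sum.elim_inl] at hmem
      rcases mem_stepSet_iff.1 hmem with ⟨_, h⟩ | ⟨i, j, hi, h⟩
      · exact absurd h (by simp)
      · obtain rfl : lu = child lu' i j := by injection h
        rw [nsplits_child (π.valid lu' i hi), ih _ hs']; omega
    · simp only [Sum.elim_inr, Finset.mem_singleton] at hmem
      exact absurd hmem (by simp)

lemma traj_all_right (π : Policy q C) (l : Branch q C) :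
    ∀ s ∈ traj π l (q + 1), s.isRight := by
  intro s hs
  rcases s with lu | lu
  · exfalso
    have h1 := mem_traj_inl _ _ hs
    have h2 := nsplits_le lu
    omega
  · rfl

lemma tauSet_mem (π : Policy q C) (l : Branch q C) :
    tau π l ∈ {t : ℕ | 1 ≤ t ∧ ∀ x ∈ traj π l t, x.isRight} :=
  Nat.sInf_mem ⟨q + 1, by omega, traj_all_right π l⟩

lemma tau_le (π : Policy q C) (l : Branch q C) : tau π l ≤ q + 1 :=
  Nat.sInf_le ⟨by omega, traj_all_right π l⟩

lemma one_le_tau (π : Policy q C) (l : Branch q C) : 1 ≤ tau π l := (tauSet_mem π l).1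

lemma traj_succ_of_right {π : Policy q C} {l : Branch q C} {t : ℕ}
    (h : ∀ s ∈ traj π l t, s.isRight) : traj π l (t + 1) = traj π l t := by
  ext s
  simp only [traj, Finset.mem_biUnion]
  constructor
  · rintro ⟨s', hs', hmem⟩
    rcases s' with lu | lu
    · exact absurd (h _ hs') (by simp)
    · simp only [Sum.elim_inr, Finset.mem_singleton] at hmem; subst hmem; exact hs'
  · intro hs
    refine ⟨s, hs, ?_⟩
    rcases s with lu | lu
    · exact absurd (h _ hs) (by simp)
    · simp

lemma traj_stable (π : Policy q C) (l : Branch q C) :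
    ∀ t, tau π l ≤ t → traj π l t = traj π l (tau π l) := by
  intro t ht
  induction t with
  | zero => have := one_le_tau π l; omega
  | succ t ih =>
    rcases eq_or_lt_of_le ht with h | h
    · rw [h]
    · have h' : tau π l ≤ t := by omega
      have hall : ∀ s ∈ traj π l t, s.isRight := by
        intro s hs; rw [ih h'] at hs; exact (tauSet_mem π l).2 s hs
      rw [traj_succ_of_right hall, ih h']

lemma traj_right_of_le {π : Policy q C} {l : Branch q C} {t : ℕ} (ht : tau π l ≤ t) :
    ∀ s ∈ traj π l t, s.isRight := by
  intro s hs
  rw [traj_stable π l t ht] at hs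
  exact (tauSet_mem π l).2 s hs

end Traj
section Value

variable {q K : ℕ} {C : Fin q → ℕ} (D : Multiset ((∀ i : Fin q, Fin (C i)) × Fin K)) (lam : ℝ)

lemma rew_right (π : Policy q C) (lu : Branch q C) : rew D lam π (Sum.inr lu) = 0 := rfl

lemma rew_none {π : Policy q C} {lu : Branch q C} (h : π.act lu = none) :
    rew D lam π (Sum.inl lu) = Hb D lu := by
  simp only [rew]; rw [h]

lemma rew_some {π : Policy q C} {lu : Branch q C} {i : Fin q} (h : π.act lu = some i) :
    rew D lam π (Sum.inl lu) = -lam := by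
  simp only [rew]; rw [h]

/-- Partial-sum form of the value. -/
noncomputable def VN (π : Policy q C) (l : Branch q C) (N : ℕ) : ℝ :=
  ∑ t ∈ Finset.range N, ∑ x ∈ traj π l t, rew D lam π x

lemma sum_rew_zero {π : Policy q C} {l : Branch q C} {t : ℕ} (h : tau π l ≤ t) :
    ∑ x ∈ traj π l t, rew D lam π x = 0 := by
  refine Finset.sum_eq_zero fun x hx => ?_
  have := traj_right_of_le h x hx
  rcases x with lu | lu
  · simp at this
  · rfl

lemma V_eq_VN {π : Policy q C} {l : Branch q C} {N : ℕ} (h : tau π l ≤ N) :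
    V D lam π l = VN D lam π l N := by
  unfold V VN
  refine Finset.sum_subset (Finset.range_subset_range.2 h) fun t _ ht => ?_
  rw [Finset.mem_range, not_lt] at ht
  exact sum_rew_zero D lam ht

/-- Terminal case. -/
lemma traj_of_none {π : Policy q C} {l : Branch q C} (h : π.act l = none) :
    ∀ t, 1 ≤ t → traj π l t = {Sum.inr l} := by
  intro t
  induction t with
  | zero => omega
  | succ t ih =>
    intro _
    rcases Nat.eq_zero_or_pos t with rfl | ht
    · show Finset.biUnion {Sum.inl l} _ = _
      rw [Finset.singleton_biUnion]
      show stepSet π l = _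
      unfold stepSet; rw [h]
    · show Finset.biUnion (traj π l t) _ = _
      rw [ih ht, Finset.singleton_biUnion]
      rfl

lemma tau_of_none {π : Policy q C} {l : Branch q C} (h : π.act l = none) : tau π l = 1 := by
  refine le_antisymm (Nat.sInf_le ⟨le_refl 1, ?_⟩) (one_le_tau π l)
  rw [traj_of_none h 1 le_rfl]
  simp

lemma V_of_none {π : Policy q C} {l : Branch q C} (h : π.act l = none) :
    V D lam π l = Hb D l := by
  rw [V_eq_VN D lam (le_of_eq (tau_of_none h))]
  unfold VN
  rw [Finset.sum_range_one]
  show ∑ x ∈ {Sum.inl l}, rew D lam π x = _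
  rw [Finset.sum_singleton, rew_none D lam h]

lemma subDTof_of_none {π : Policy q C} {l : Branch q C} (h : π.act l = none) :
    subDTof π l = {l} := by
  unfold subDTof
  rw [tau_of_none h, traj_of_none h 1 le_rfl]
  simp

/-- Split case. -/
lemma traj_of_some {π : Policy q C} {l : Branch q C} {i : Fin q} (h : π.act l = some i) :
    ∀ t, traj π l (t + 1) = Finset.univ.biUnion (fun j : Fin (C i) => traj π (child l i j) t) := by
  intro t
  induction t with
  | zero =>
    show Finset.biUnion {Sum.inl l} _ = _
    rw [Finset.singleton_biUnion]
    show stepSet π l = _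
    unfold stepSet; rw [h]
    ext s
    simp [childrenF, Finset.image_image, traj, eq_comm]
  | succ t ih =>
    show Finset.biUnion (traj π l (t+1)) _ = _
    rw [ih]
    ext s
    simp only [Finset.mem_biUnion, Finset.mem_univ, true_and]
    constructor
    · rintro ⟨s', ⟨j, hj⟩, hmem⟩
      exact ⟨j, Finset.mem_biUnion.2 ⟨s', hj, hmem⟩⟩
    · rintro ⟨j, hj⟩
      obtain ⟨s', hs', hmem⟩ := Finset.mem_biUnion.1 hj
      exact ⟨s', ⟨j, hs'⟩, hmem⟩

lemma traj_child_disjoint {π : Policy q C} {l : Branch q C} {i : Fin q} {t : ℕ}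
    {j j' : Fin (C i)} (hne : j ≠ j') :
    Disjoint (traj π (child l i j) t) (traj π (child l i j') t) := by
  rw [Finset.disjoint_left]
  intro s hs hs'
  have h1 := ext_coord (mem_traj_ext t s hs)
  have h2 := ext_coord (mem_traj_ext t s hs')
  rw [h1] at h2
  exact hne (Option.some_injective _ h2)

lemma sum_traj_children {π : Policy q C} {l : Branch q C} {i : Fin q} (t : ℕ)
    (f : BState q C → ℝ) :
    ∑ x ∈ Finset.univ.biUnion (fun j : Fin (C i) => traj π (child l i j) t), f x
      = ∑ j : Fin (C i), ∑ x ∈ traj π (child l i j) t, f x :=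
  Finset.sum_biUnion (fun _ _ _ _ hne => traj_child_disjoint hne)

lemma V_of_some {π : Policy q C} {l : Branch q C} {i : Fin q} (h : π.act l = some i) :
    V D lam π l = -lam + ∑ j : Fin (C i), V D lam π (child l i j) := by
  rw [V_eq_VN D lam (le_trans (tau_le π l) (by omega : q + 1 ≤ q + 2))]
  unfold VN
  rw [Finset.sum_range_succ']
  have h0 : ∑ x ∈ traj π l 0, rew D lam π x = -lam := by
    show ∑ x ∈ {Sum.inl l}, rew D lam π x = -lam
    rw [Finset.sum_singleton, rew_some D lam h]
  rw [h0]
  have hstep : ∀ t, ∑ x ∈ traj π l (t + 1), rew D lam π x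
      = ∑ j : Fin (C i), ∑ x ∈ traj π (child l i j) t, rew D lam π x := by
    intro t
    rw [traj_of_some h t, sum_traj_children]
  rw [Finset.sum_congr rfl (fun t _ => hstep t), Finset.sum_comm, add_comm]
  congr 1
  refine Finset.sum_congr rfl fun j _ => ?_
  rw [V_eq_VN D lam (tau_le π (child l i j))]
  rfl

lemma subDTof_of_some {π : Policy q C} {l : Branch q C} {i : Fin q} (h : π.act l = some i) :
    subDTof π l = Finset.univ.biUnion (fun j : Fin (C i) => subDTof π (child l i j)) := by
  unfold subDTof
  rw [← traj_stable π l (q + 2) (le_trans (tau_le π l) (by omega)), traj_of_some h (q + 1)]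
  rw [Finset.biUnion_image]
  refine Finset.biUnion_congr rfl fun j _ => ?_
  rw [traj_stable π (child l i j) (q + 1) (tau_le π (child l i j))]

lemma subDTof_ext {π : Policy q C} {l : Branch q C} :
    ∀ e ∈ subDTof π l, BExt l e := by
  intro e he
  obtain ⟨s, hs, rfl⟩ := Finset.mem_image.1 he
  exact mem_traj_ext _ s hs

end Value
section Congr

variable {q K : ℕ} {C : Fin q → ℕ} (D : Multiset ((∀ i : Fin q, Fin (C i)) × Fin K)) (lam : ℝ)

lemma traj_congr {π₁ π₂ : Policy q C} {l : Branch q C}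
    (h : ∀ lu, BExt l lu → π₁.act lu = π₂.act lu) :
    ∀ t, traj π₁ l t = traj π₂ l t := by
  intro t
  induction t with
  | zero => rfl
  | succ t ih =>
    show Finset.biUnion _ _ = Finset.biUnion _ _
    rw [ih]
    refine Finset.biUnion_congr rfl fun s hs => ?_
    rcases s with lu | lu
    · show stepSet π₁ lu = stepSet π₂ lu
      have hext : BExt l lu := mem_traj_ext (π := π₂) t (Sum.inl lu) hs
      unfold stepSet
      rw [h lu hext]
    · rfl

lemma tau_congr {π₁ π₂ : Policy q C} {l : Branch q C}
    (h : ∀ lu, BExt l lu → π₁.act lu = π₂.act lu) : tau π₁ l = tau π₂ l := by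
  unfold tau
  congr 1
  ext t
  simp only [Set.mem_setOf_eq, traj_congr h t]

lemma V_congr {π₁ π₂ : Policy q C} {l : Branch q C}
    (h : ∀ lu, BExt l lu → π₁.act lu = π₂.act lu) :
    V D lam π₁ l = V D lam π₂ l := by
  unfold V
  rw [tau_congr h]
  refine Finset.sum_congr rfl fun t _ => ?_
  rw [traj_congr h t]
  refine Finset.sum_congr rfl fun s hs => ?_
  rcases s with lu | lu
  · have hext : BExt l lu := mem_traj_ext (π := π₂) t (Sum.inl lu) hs
    simp only [rew]
    rw [h lu hext]
  · rfl

end Congr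

section SubDTLemmas

variable {q K : ℕ} {C : Fin q → ℕ}

lemma mem_childrenF {l l' : Branch q C} {i : Fin q} :
    l' ∈ childrenF l i ↔ ∃ j, l' = child l i j := by
  unfold childrenF
  simp [eq_comm]

lemma SubDT_inv (hC1 : ∀ i, 1 ≤ C i) {l : Branch q C} {T : Finset (Branch q C)} {m : ℕ}
    (h : SubDT l T m) :
    (∀ a ∈ T, BExt l a) ∧
      (∀ a ∈ T, ∀ b ∈ T, a ≠ b → ∀ x, inBranch a x → inBranch b x → False) := by
  induction h with
  | leaf =>
    refine ⟨fun a ha => ?_, fun a ha b hb hab x _ _ => ?_⟩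
    · rw [Finset.mem_singleton] at ha; subst ha; exact BExt.refl _
    · rw [Finset.mem_singleton] at ha hb; exact hab (ha.trans hb.symm)
  | split T m l' i hT hmem hnone ih =>
    obtain ⟨ihext, ihdisj⟩ := ih
    have hchild_mem : ∀ a, a ∈ T.erase l' ∪ childrenF l' i →
        (a ∈ T ∧ a ≠ l') ∨ ∃ j, a = child l' i j := by
      intro a ha
      rcases Finset.mem_union.1 ha with ha | ha
      · exact Or.inl ⟨Finset.mem_of_mem_erase ha, Finset.ne_of_mem_erase ha⟩
      · exact Or.inr (mem_childrenF.1 ha)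
    constructor
    · intro a ha
      rcases hchild_mem a ha with ⟨haT, _⟩ | ⟨j, rfl⟩
      · exact ihext a haT
      · exact (ihext l' hmem).trans (ext_child hnone j)
    · intro a ha b hb hab x hxa hxb
      rcases hchild_mem a ha with ⟨haT, hal'⟩ | ⟨j, rfl⟩ <;>
        rcases hchild_mem b hb with ⟨hbT, hbl'⟩ | ⟨j', hb'⟩
      · exact ihdisj a haT b hbT hab x hxa hxb
      · subst hb'
        exact ihdisj a haT l' hmem hal' x hxa (inBranch_of_ext (ext_child hnone j') hxb)
      · exact ihdisj l' hmem b hbT (Ne.symm hbl') x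
          (inBranch_of_ext (ext_child hnone j) hxa) hxb
      · subst hb'
        have hj : j = j' := by
          have h1 := inBranch_child_coord hxa
          have h2 := inBranch_child_coord hxb
          rw [h1] at h2; exact h2
        exact hab (by rw [hj])

lemma SubDT_glue (hC1 : ∀ i, 1 ≤ C i) {l : Branch q C} {T : Finset (Branch q C)} {m : ℕ}
    (h1 : SubDT l T m) {l' : Branch q C} (hl' : l' ∈ T)
    {T' : Finset (Branch q C)} {m' : ℕ} (h2 : SubDT l' T' m') :
    SubDT l (T.erase l' ∪ T') (m + m') := by
  induction h2 with
  | leaf =>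
    have : T.erase l' ∪ {l'} = T := by
      rw [Finset.union_comm, ← Finset.insert_eq, Finset.insert_erase hl']
    rw [this]
    exact h1
  | split T₀ m₀ l₀ i hT₀ hmem hnone ih =>
    have hnotin : l₀ ∉ T.erase l' := by
      intro hmem₀
      have h₀T : l₀ ∈ T := Finset.mem_of_mem_erase hmem₀
      have h₀ne : l₀ ≠ l' := Finset.ne_of_mem_erase hmem₀
      have hext₀ : BExt l' l₀ := (SubDT_inv hC1 hT₀).1 l₀ hmem
      obtain ⟨x, hx⟩ := exists_inBranch hC1 l₀
      exact (SubDT_inv hC1 h1).2 l₀ h₀T l' hl' h₀ne x hx (inBranch_of_ext hext₀ hx)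
    have heq : (T.erase l' ∪ T₀).erase l₀ ∪ childrenF l₀ i
        = T.erase l' ∪ (T₀.erase l₀ ∪ childrenF l₀ i) := by
      rw [Finset.erase_union_distrib, Finset.erase_eq_of_notMem hnotin, Finset.union_assoc]
    have := SubDT.split l (T.erase l' ∪ T₀) (m + m₀) l₀ i ih
      (Finset.mem_union_right _ hmem) hnone
    rw [heq] at this
    exact this

end SubDTLemmas
section Forward

variable {q K : ℕ} {C : Fin q → ℕ} (D : Multiset ((∀ i : Fin q, Fin (C i)) × Fin K)) (lam : ℝ)

/-- Combine sub-DTs of all children into a sub-DT of the parent. -/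
lemma SubDT_combine (hC1 : ∀ i, 1 ≤ C i) {l : Branch q C} {i : Fin q} (hli : l i = none)
    (Tc : Fin (C i) → Finset (Branch q C)) (mc : Fin (C i) → ℕ)
    (hTc : ∀ j, SubDT (child l i j) (Tc j) (mc j)) :
    SubDT l (Finset.univ.biUnion Tc) (1 + ∑ j, mc j) := by
  have hcoord : ∀ j, ∀ e ∈ Tc j, e i = some j := by
    intro j e he
    exact ext_coord ((SubDT_inv hC1 (hTc j)).1 e he)
  have key : ∀ s : Finset (Fin (C i)),
      SubDT l ((Finset.univ \ s).image (child l i) ∪ s.biUnion Tc) (1 + ∑ j ∈ s, mc j) := by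
    intro s
    induction s using Finset.induction with
    | empty =>
      have h1 : SubDT l (({l} : Finset (Branch q C)).erase l ∪ childrenF l i) (0 + 1) :=
        SubDT.split l {l} 0 l i (SubDT.leaf l) (Finset.mem_singleton_self l) hli
      simp only [Finset.erase_singleton, Finset.empty_union] at h1
      simpa [childrenF] using h1
    | @insert j s hj ih =>
      have hmem : child l i j ∈ (Finset.univ \ s).image (child l i) ∪ s.biUnion Tc :=
        Finset.mem_union_left _ (Finset.mem_image.2 ⟨j, by simp [hj], rfl⟩)
      have hglue := SubDT_glue hC1 ih hmem (hTc j)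
      have hset : ((Finset.univ \ s).image (child l i) ∪ s.biUnion Tc).erase (child l i j)
            ∪ Tc j
          = (Finset.univ \ insert j s).image (child l i) ∪ (insert j s).biUnion Tc := by
        rw [Finset.erase_union_distrib]
        have e1 : ((Finset.univ \ s).image (child l i)).erase (child l i j)
            = (Finset.univ \ insert j s).image (child l i) := by
          rw [← Finset.image_erase (child_injective l i)]
          congr 1
          ext j'
          simp only [Finset.mem_erase, Finset.mem_sdiff, Finset.mem_univ, true_and,
            Finset.mem_insert]
          tauto
        have e2 : (s.biUnion Tc).erase (child l i j) = s.biUnion Tc := by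
          refine Finset.erase_eq_of_notMem fun hmem' => ?_
          obtain ⟨j', hj', he⟩ := Finset.mem_biUnion.1 hmem'
          have := hcoord j' _ he
          rw [child_apply_self] at this
          obtain rfl := Option.some_injective _ this
          exact hj hj'
        rw [e1, e2, Finset.biUnion_insert, Finset.union_comm (Tc j), Finset.union_assoc]
      have hnum : (1 + ∑ j' ∈ s, mc j') + mc j = 1 + ∑ j' ∈ insert j s, mc j' := by
        rw [Finset.sum_insert hj]; omega
      rw [hset, hnum] at hglue
      exact hglue
  have := key Finset.univ
  simpa using this

lemma HT_biUnion {i : Fin q} (Tc : Fin (C i) → Finset (Branch q C))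
    (hcoord : ∀ j, ∀ e ∈ Tc j, e i = some j) :
    HT D (Finset.univ.biUnion Tc) = ∑ j, HT D (Tc j) := by
  unfold HT
  refine Finset.sum_biUnion fun a _ b _ hab => ?_
  simp only [Function.onFun]
  rw [Finset.disjoint_left]
  intro e he he'
  have h1 := hcoord a e he
  have h2 := hcoord b e he'
  rw [h1] at h2
  exact hab (Option.some_injective _ h2)

lemma nsplits_lt_of_none {l : Branch q C} {i : Fin q} (h : l i = none) : nsplits l < q := by
  have : (Finset.univ.filter (fun i' : Fin q => l i' ≠ none)) ⊂ Finset.univ := by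
    refine Finset.ssubset_univ_iff.2 fun huniv => ?_
    have : i ∈ Finset.univ.filter (fun i' : Fin q => l i' ≠ none) := by
      rw [huniv]; exact Finset.mem_univ i
    rw [Finset.mem_filter] at this
    exact this.2 h
  have := Finset.card_lt_card this
  simpa [nsplits] using this

lemma forward (hC1 : ∀ i, 1 ≤ C i) (π : Policy q C) :
    ∀ n : ℕ, ∀ l : Branch q C, q - nsplits l ≤ n →
      ∃ m, SubDT l (subDTof π l) m ∧
        -lam * m + HT D (subDTof π l) = V D lam π l := by
  intro n
  induction n with
  | zero =>
    intro l hl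
    rcases h : π.act l with _ | i
    · refine ⟨0, ?_, ?_⟩
      · rw [subDTof_of_none h]; exact SubDT.leaf l
      · rw [subDTof_of_none h, V_of_none D lam h]
        simp [HT]
    · exfalso
      have := nsplits_lt_of_none (π.valid l i h)
      omega
  | succ n ih =>
    intro l hl
    rcases h : π.act l with _ | i
    · refine ⟨0, ?_, ?_⟩
      · rw [subDTof_of_none h]; exact SubDT.leaf l
      · rw [subDTof_of_none h, V_of_none D lam h]
        simp [HT]
    · have hli : l i = none := π.valid l i h
      have hlt := nsplits_lt_of_none hli
      have hch : ∀ j : Fin (C i), q - nsplits (child l i j) ≤ n := by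
        intro j
        rw [nsplits_child hli]
        omega
      choose mc hmc hval using fun j : Fin (C i) => ih (child l i j) (hch j)
      refine ⟨1 + ∑ j, mc j, ?_, ?_⟩
      · rw [subDTof_of_some h]
        exact SubDT_combine hC1 hli _ _ hmc
      · rw [subDTof_of_some h, V_of_some D lam h,
          HT_biUnion D (fun j => subDTof π (child l i j))
            (fun j e he => ext_coord (subDTof_ext e he))]
        rw [← Finset.sum_congr rfl fun j _ => hval j]
        push_cast
        rw [Finset.sum_add_distrib, ← Finset.mul_sum]
        ring
  
end Forward
section Converse

variable {q K : ℕ} {C : Fin q → ℕ} (D : Multiset ((∀ i : Fin q, Fin (C i)) × Fin K)) (lam : ℝ)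

lemma SubDT_cases (hC1 : ∀ i, 1 ≤ C i) {l : Branch q C} {T : Finset (Branch q C)} {m : ℕ}
    (h : SubDT l T m) :
    (T = {l} ∧ m = 0) ∨
      ∃ i : Fin q, l i = none ∧
        ∃ (Tf : Fin (C i) → Finset (Branch q C)) (mf : Fin (C i) → ℕ),
          (∀ j, SubDT (child l i j) (Tf j) (mf j)) ∧
          T = Finset.univ.biUnion Tf ∧ m = 1 + ∑ j, mf j := by
  induction h with
  | leaf => exact Or.inl ⟨rfl, rfl⟩
  | split T₀ m₀ l' i' hT₀ hmem hnone ih =>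
    rcases ih with ⟨rfl, rfl⟩ | ⟨i, hinone, Tf, mf, hsub, rfl, rfl⟩
    · -- first split: l' = l
      rw [Finset.mem_singleton] at hmem
      subst hmem
      refine Or.inr ⟨i', hnone, fun j => {child l' i' j}, fun _ => 0, fun j => SubDT.leaf _, ?_, ?_⟩
      · rw [Finset.erase_singleton, Finset.empty_union]
        ext e
        simp [mem_childrenF, Finset.mem_biUnion]
      · simp
    · -- split of a deeper leaf
      obtain ⟨j₀, _, hj₀⟩ := Finset.mem_biUnion.1 hmem
      have hcoord : ∀ j, ∀ e ∈ Tf j, e i = some j := by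
        intro j e he
        exact ext_coord ((SubDT_inv hC1 (hsub j)).1 e he)
      have hl'j : ∀ j, l' ∈ Tf j → j = j₀ := by
        intro j hj
        have h1 := hcoord j l' hj
        have h2 := hcoord j₀ l' hj₀
        rw [h1] at h2
        exact Option.some_injective _ h2
      refine Or.inr ⟨i, hinone,
        Function.update Tf j₀ ((Tf j₀).erase l' ∪ childrenF l' i'),
        Function.update mf j₀ (mf j₀ + 1), ?_, ?_, ?_⟩
      · intro j
        rcases eq_or_ne j j₀ with rfl | hne
        · rw [Function.update_self, Function.update_self]
          exact SubDT.split _ _ _ l' i' (hsub j) hj₀ hnone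
        · rw [Function.update_of_ne hne, Function.update_of_ne hne]
          exact hsub j
      · ext e
        simp only [Finset.mem_union, Finset.mem_erase, Finset.mem_biUnion, Finset.mem_univ,
          true_and]
        constructor
        · rintro (⟨hne, j, hj⟩ | hce)
          · rcases eq_or_ne j j₀ with rfl | hjne
            · refine ⟨j, ?_⟩
              rw [Function.update_self]
              exact Finset.mem_union_left _ (Finset.mem_erase.2 ⟨hne, hj⟩)
            · refine ⟨j, ?_⟩
              rw [Function.update_of_ne hjne]
              exact hj
          · refine ⟨j₀, ?_⟩
            rw [Function.update_self]
            exact Finset.mem_union_right _ hce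
        · rintro ⟨j, hj⟩
          rcases eq_or_ne j j₀ with rfl | hjne
          · rw [Function.update_self] at hj
            rcases Finset.mem_union.1 hj with hj' | hj'
            · exact Or.inl ⟨(Finset.mem_erase.1 hj').1, j, (Finset.mem_erase.1 hj').2⟩
            · exact Or.inr hj'
          · rw [Function.update_of_ne hjne] at hj
            refine Or.inl ⟨fun he => ?_, j, hj⟩
            subst he
            exact hjne (hl'j j hj)
      · rw [Finset.sum_update_of_mem (Finset.mem_univ j₀)]
        have h0 := Finset.add_sum_erase Finset.univ mf (Finset.mem_univ j₀)
        rw [← Finset.sdiff_singleton_eq_erase] at h0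
        omega

lemma converse (hC1 : ∀ i, 1 ≤ C i) :
    ∀ (m : ℕ) (l : Branch q C) (T : Finset (Branch q C)), SubDT l T m →
      ∃ π : Policy q C, V D lam π l = -lam * m + HT D T := by
  intro m
  induction m using Nat.strong_induction_on with
  | _ m IH =>
    intro l T h
    rcases SubDT_cases hC1 h with ⟨rfl, rfl⟩ | ⟨i, hinone, Tf, mf, hsub, rfl, rfl⟩
    · refine ⟨⟨fun _ => none, fun _ _ h' => by cases h'⟩, ?_⟩
      rw [V_of_none D lam rfl]
      simp [HT]
    · have hlt : ∀ j, mf j < 1 + ∑ j', mf j' := by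
        intro j
        have := Finset.single_le_sum (f := mf) (fun j' _ => Nat.zero_le _) (Finset.mem_univ j)
        omega
      choose πf hπf using fun j : Fin (C i) => IH (mf j) (hlt j) (child l i j) (Tf j) (hsub j)
      classical
      set act0 : Branch q C → Option (Fin q) := fun lu => if lu = l then some i else
          Option.casesOn (lu i) none (fun j => (πf j).act lu) with hact0
      have hvalid : ∀ lu i', act0 lu = some i' → lu i' = none := by
        intro lu i' h'
        by_cases hlu : lu = l
        · simp only [hact0, if_pos hlu] at h'
          obtain rfl := Option.some_injective _ h'
          rw [hlu]; exact hinone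
        · simp only [hact0, if_neg hlu] at h'
          rcases hlui : lu i with _ | j
          · rw [hlui] at h'; cases h'
          · rw [hlui] at h'
            exact (πf j).valid lu i' h'
      set π : Policy q C := ⟨act0, hvalid⟩ with hπdef
      have hactl : π.act l = some i := by
        show act0 l = some i
        simp [hact0]
      have hagree : ∀ j : Fin (C i), ∀ lu, BExt (child l i j) lu → π.act lu = (πf j).act lu := by
        intro j lu hext
        have hlui : lu i = some j := ext_coord hext
        have hne : lu ≠ l := by
          intro he
          rw [he, hinone] at hlui
          cases hlui
        show act0 lu = (πf j).act lu
        simp only [hact0, if_neg hne, hlui]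
      refine ⟨π, ?_⟩
      rw [V_of_some D lam hactl]
      have hVc : ∀ j : Fin (C i), V D lam π (child l i j) = -lam * (mf j) + HT D (Tf j) := by
        intro j
        rw [V_congr D lam (hagree j), hπf j]
      rw [Finset.sum_congr rfl fun j _ => hVc j,
        HT_biUnion D Tf (fun j e he => ext_coord ((SubDT_inv hC1 (hsub j)).1 e he))]
      push_cast
      rw [Finset.sum_add_distrib, ← Finset.mul_sum]
      ring

end Converse

/-- `max_π V^π(Ω) = max_T R(T)`, attained by the DT of an optimal
policy: for an optimal policy `πs`, the DT `T^{πs}` is a DT whose regularized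
objective equals `V^{πs}(Ω)` and dominates every other DT. -/
theorem optimal_policy_yields_optimal_tree {q K : ℕ} (hq : 2 ≤ q) (hK : 2 ≤ K)
    {C : Fin q → ℕ} (hC : ∀ i, 2 ≤ C i)
    (D : Multiset ((∀ i : Fin q, Fin (C i)) × Fin K)) (hD : D ≠ 0)
    (lam : ℝ) (hlam0 : 0 < lam) (hlam1 : lam < 1)
    (πs : Policy q C)
    (hopt : ∀ π : Policy q C, V D lam π (root q C) ≤ V D lam πs (root q C)) :
    ∃ m : ℕ, SubDT (root q C) (subDTof πs (root q C)) m ∧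
      -lam * m + HT D (subDTof πs (root q C)) = V D lam πs (root q C) ∧
      ∀ (T : Finset (Branch q C)) (m' : ℕ), SubDT (root q C) T m' →
        -lam * m' + HT D T ≤ -lam * m + HT D (subDTof πs (root q C)) := by
  have hC1 : ∀ i, 1 ≤ C i := fun i => le_trans (by omega) (hC i)
  obtain ⟨m, hsub, hval⟩ := forward D lam hC1 πs (q - nsplits (root q C)) (root q C) le_rfl
  refine ⟨m, hsub, hval, ?_⟩
  intro T m' hT
  obtain ⟨π, hπ⟩ := converse D lam hC1 m' (root q C) T hT
  rw [hval, ← hπ]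
  exact hopt π
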